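/- Let (L, ε, ∧_ε, ∨_ε) be a finite canonical ℰ-lattice whose lattice of fixed points Fix ε = {a₁, a₂, …, aₙ} is totally ordered, and set mᵢ = |[aᵢ]| for i = 1, …, n. Then the number of ℰ-lattice automorphisms of L equals ∏_{i=1}^{n} (mᵢ − 1)!. -/

import Mathlib

/-- A canonical ℰ-lattice: a set `L` with a map `eps : L → L` and two associative,
commutative binary operations satisfying `a ∧ a = a ∨ a = ε a`,
the absorption laws `a ∧ (a ∨ b) = a ∨ (a ∧ b) = ε a`, and (canonicity)
all meets and joins are fixed points of `eps`. -/
structure CELattice (L : Type*) where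
  eps : L → L
  meet : L → L → L
  join : L → L → L
  meet_assoc : ∀ a b c, meet a (meet b c) = meet (meet a b) c
  join_assoc : ∀ a b c, join a (join b c) = join (join a b) c
  meet_comm : ∀ a b, meet a b = meet b a
  join_comm : ∀ a b, join a b = join b a
  meet_self : ∀ a, meet a a = eps a
  join_self : ∀ a, join a a = eps a
  meet_absorb : ∀ a b, meet a (join a b) = eps a
  join_absorb : ∀ a b, join a (meet a b) = eps a
  meet_canonical : ∀ a b, eps (meet a b) = meet a b
  join_canonical : ∀ a b, eps (join a b) = join a b

namespace CELattice

variable {L : Type*}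

/-- The set of fixed points of `eps`. -/
def Fix (E : CELattice L) : Set L := {a | E.eps a = a}

/-- The class `[a] = {b | ε b = ε a}`. -/
def cls (E : CELattice L) (a : L) : Set L := {b | E.eps b = E.eps a}

/-- The fixed points of `eps`, as a type. -/
abbrev FixT (E : CELattice L) : Type _ := {a : L // E.eps a = a}

/-- An ℰ-lattice isomorphism: a bijection commuting with `eps` and preserving
meets and joins. -/
def IsEIso {L₁ L₂ : Type*} (E₁ : CELattice L₁) (E₂ : CELattice L₂) (f : L₁ → L₂) : Prop :=
  Function.Bijective f ∧ (∀ a, f (E₁.eps a) = E₂.eps (f a)) ∧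
    (∀ a b, f (E₁.meet a b) = E₂.meet (f a) (f b)) ∧
    (∀ a b, f (E₁.join a b) = E₂.join (f a) (f b))

end CELattice

namespace CELattice

variable {L : Type*}

/-- The group `Aut_ℰ(L)` of ℰ-lattice automorphisms of a canonical ℰ-lattice,
as a subgroup of the symmetric group on `L`. -/
def EAut (E : CELattice L) : Subgroup (Equiv.Perm L) where
  carrier := {f : Equiv.Perm L | (∀ a, f (E.eps a) = E.eps (f a)) ∧
    (∀ a b, f (E.meet a b) = E.meet (f a) (f b)) ∧
    (∀ a b, f (E.join a b) = E.join (f a) (f b))}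
  one_mem' := by simp
  mul_mem' := by
    rintro f g ⟨hf1, hf2, hf3⟩ ⟨hg1, hg2, hg3⟩
    refine ⟨fun a => ?_, fun a b => ?_, fun a b => ?_⟩ <;>
      simp [Equiv.Perm.mul_apply, hg1, hg2, hg3, hf1, hf2, hf3]
  inv_mem' := by
    rintro f ⟨hf1, hf2, hf3⟩
    refine ⟨fun a => ?_, fun a b => ?_, fun a b => ?_⟩ <;>
      (apply f.injective;
       simp [hf1, hf2, hf3, ← Equiv.Perm.inv_def])

/-- The meet of two fixed points, as a fixed point (the lattice operation on `Fix ε`). -/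
def fixMeet (E : CELattice L) (a b : E.FixT) : E.FixT :=
  ⟨E.meet a.1 b.1, E.meet_canonical _ _⟩

/-- The join of two fixed points, as a fixed point (the lattice operation on `Fix ε`). -/
def fixJoin (E : CELattice L) (a b : E.FixT) : E.FixT :=
  ⟨E.join a.1 b.1, E.join_canonical _ _⟩

/-- The group `Aut(Fix ε)` of lattice automorphisms of the lattice of fixed points. -/
def AutFix (E : CELattice L) : Subgroup (Equiv.Perm E.FixT) where
  carrier := {σ : Equiv.Perm E.FixT | (∀ a b, σ (E.fixMeet a b) = E.fixMeet (σ a) (σ b)) ∧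
    (∀ a b, σ (E.fixJoin a b) = E.fixJoin (σ a) (σ b))}
  one_mem' := by simp
  mul_mem' := by
    rintro f g ⟨hf1, hf2⟩ ⟨hg1, hg2⟩
    refine ⟨fun a b => ?_, fun a b => ?_⟩ <;>
      simp [Equiv.Perm.mul_apply, hg1, hg2, hf1, hf2]
  inv_mem' := by
    rintro f ⟨hf1, hf2⟩
    refine ⟨fun a b => ?_, fun a b => ?_⟩ <;>
      (apply f.injective; simp [hf1, hf2, ← Equiv.Perm.inv_def])

/-- `S'([a])`: the subgroup of the symmetric group on the class `[a]`
consisting of the permutations fixing `a`. -/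
def Sprime (E : CELattice L) (a : L) : Subgroup (Equiv.Perm {b : L // E.eps b = E.eps a}) where
  carrier := {σ | σ ⟨a, rfl⟩ = ⟨a, rfl⟩}
  one_mem' := by simp
  mul_mem' := by
    intro f g hf hg
    simp only [Set.mem_setOf_eq] at *
    simp [Equiv.Perm.mul_apply, hg, hf]
  inv_mem' := by
    intro f hf
    simp only [Set.mem_setOf_eq] at *
    rw [Equiv.Perm.inv_eq_iff_eq, hf]

end CELattice

namespace CELattice

variable {L : Type*} (E : CELattice L)

lemma eps_idem (a : L) : E.eps (E.eps a) = E.eps a := by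
  rw [← E.meet_self a, E.meet_canonical]

lemma meet_eps (a b : L) : E.meet (E.eps a) (E.eps b) = E.meet a b :=
  calc E.meet (E.eps a) (E.eps b)
      = E.meet (E.meet a a) (E.meet b b) := by rw [E.meet_self, E.meet_self]
    _ = E.meet a (E.meet a (E.meet b b)) := (E.meet_assoc a a (E.meet b b)).symm
    _ = E.meet a (E.meet (E.meet a b) b) := by rw [E.meet_assoc a b b]
    _ = E.meet a (E.meet b (E.meet a b)) := by rw [E.meet_comm (E.meet a b) b]
    _ = E.meet (E.meet a b) (E.meet a b) := E.meet_assoc a b (E.meet a b)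
    _ = E.eps (E.meet a b) := E.meet_self _
    _ = E.meet a b := E.meet_canonical a b

lemma join_eps (a b : L) : E.join (E.eps a) (E.eps b) = E.join a b :=
  calc E.join (E.eps a) (E.eps b)
      = E.join (E.join a a) (E.join b b) := by rw [E.join_self, E.join_self]
    _ = E.join a (E.join a (E.join b b)) := (E.join_assoc a a (E.join b b)).symm
    _ = E.join a (E.join (E.join a b) b) := by rw [E.join_assoc a b b]
    _ = E.join a (E.join b (E.join a b)) := by rw [E.join_comm (E.join a b) b]
    _ = E.join (E.join a b) (E.join a b) := E.join_assoc a b (E.join a b)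
    _ = E.eps (E.join a b) := E.join_self _
    _ = E.join a b := E.join_canonical a b

lemma mem_eaut_iff (f : Equiv.Perm L) :
    f ∈ E.EAut ↔ (∀ a, f (E.eps a) = E.eps (f a)) ∧
      (∀ a b, f (E.meet a b) = E.meet (f a) (f b)) ∧
      (∀ a b, f (E.join a b) = E.join (f a) (f b)) := Iff.rfl

lemma mem_sprime_iff (a : L) (σ : Equiv.Perm {b : L // E.eps b = E.eps a}) :
    σ ∈ E.Sprime a ↔ σ ⟨a, rfl⟩ = ⟨a, rfl⟩ := Iff.rfl

/-- The fixed point of the class of `x`. -/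
def fixOf (x : L) : E.FixT := ⟨E.eps x, E.eps_idem x⟩

/-- Reassembling a permutation of `L` from a family of permutations of the classes. -/
def bigF (τ : ∀ a : E.FixT, ↥(E.Sprime a.1)) (x : L) : L :=
  ((τ (E.fixOf x)).1 ⟨x, (E.eps_idem x).symm⟩).1

lemma bigF_eq (τ : ∀ a : E.FixT, ↥(E.Sprime a.1)) {a : E.FixT} (x : L)
    (hx : E.eps x = E.eps a.1) : E.bigF τ x = ((τ a).1 ⟨x, hx⟩).1 := by
  obtain rfl : E.fixOf x = a := Subtype.ext (hx.trans a.2)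
  rfl

lemma bigF_eps (τ : ∀ a : E.FixT, ↥(E.Sprime a.1)) (x : L) :
    E.eps (E.bigF τ x) = E.eps x := by
  have h := ((τ (E.fixOf x)).1 ⟨x, (E.eps_idem x).symm⟩).2
  simpa [bigF, fixOf, E.eps_idem] using h

lemma bigF_left_inv (τ : ∀ a : E.FixT, ↥(E.Sprime a.1)) (x : L) :
    E.bigF (fun a => (τ a)⁻¹) (E.bigF τ x) = x := by
  have h1 : E.eps (E.bigF τ x) = E.eps ((E.fixOf x).1) := by
    show E.eps (E.bigF τ x) = E.eps (E.eps x)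
    rw [E.bigF_eps, E.eps_idem]
  rw [E.bigF_eq (fun a => (τ a)⁻¹) (E.bigF τ x) h1]
  have h2 : (⟨E.bigF τ x, h1⟩ : {b : L // E.eps b = E.eps ((E.fixOf x).1)}) =
      (τ (E.fixOf x)).1 ⟨x, (E.eps_idem x).symm⟩ := Subtype.ext rfl
  rw [h2]
  simp

/-- The permutation of `L` reassembled from a family of class permutations. -/
def gPerm (τ : ∀ a : E.FixT, ↥(E.Sprime a.1)) : Equiv.Perm L where
  toFun := E.bigF τ
  invFun := E.bigF (fun a => (τ a)⁻¹)
  left_inv := fun x => E.bigF_left_inv τ x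
  right_inv := fun x => by simpa using E.bigF_left_inv (fun a => (τ a)⁻¹) x

lemma gPerm_fix (τ : ∀ a : E.FixT, ↥(E.Sprime a.1)) (x : L) (hx : E.eps x = x) :
    E.gPerm τ x = x := by
  have hx' : E.eps x = E.eps ((E.fixOf x).1) := by
    show E.eps x = E.eps (E.eps x); rw [E.eps_idem]
  show E.bigF τ x = x
  rw [E.bigF_eq τ x hx']
  have h2 : (⟨x, hx'⟩ : {b : L // E.eps b = E.eps ((E.fixOf x).1)}) = ⟨(E.fixOf x).1, rfl⟩ :=
    Subtype.ext (by simp [fixOf, hx])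
  rw [h2, (E.mem_sprime_iff _ _).mp (τ (E.fixOf x)).2]
  simp [fixOf, hx]

lemma gPerm_eps (τ : ∀ a : E.FixT, ↥(E.Sprime a.1)) (x : L) :
    E.eps (E.gPerm τ x) = E.eps x := E.bigF_eps τ x

lemma gPerm_mem (τ : ∀ a : E.FixT, ↥(E.Sprime a.1)) : E.gPerm τ ∈ E.EAut := by
  refine ⟨fun x => ?_, fun x y => ?_, fun x y => ?_⟩
  · rw [E.gPerm_fix τ _ (E.eps_idem x)]
    exact (E.gPerm_eps τ x).symm
  · rw [E.gPerm_fix τ _ (E.meet_canonical x y)]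
    calc E.meet x y = E.meet (E.eps x) (E.eps y) := (E.meet_eps x y).symm
      _ = E.meet (E.eps (E.gPerm τ x)) (E.eps (E.gPerm τ y)) := by
          rw [E.gPerm_eps, E.gPerm_eps]
      _ = E.meet (E.gPerm τ x) (E.gPerm τ y) := E.meet_eps _ _
  · rw [E.gPerm_fix τ _ (E.join_canonical x y)]
    calc E.join x y = E.join (E.eps x) (E.eps y) := (E.join_eps x y).symm
      _ = E.join (E.eps (E.gPerm τ x)) (E.eps (E.gPerm τ y)) := by
          rw [E.gPerm_eps, E.gPerm_eps]
      _ = E.join (E.gPerm τ x) (E.gPerm τ y) := E.join_eps _ _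

end CELattice

/-- Cardinality of the stabilizer of a point in a full symmetric group. -/
lemma card_perm_stabilizer {β : Type*} [Fintype β] [DecidableEq β] (x : β) :
    Nat.card (MulAction.stabilizer (Equiv.Perm β) x) = (Nat.card β - 1).factorial := by
  have : Nonempty β := ⟨x⟩
  have horb : MulAction.orbit (Equiv.Perm β) x = Set.univ := by
    ext b
    simp only [Set.mem_univ, iff_true, MulAction.mem_orbit_iff]
    exact ⟨Equiv.swap x b, by simp [Equiv.Perm.smul_def]⟩
  have hidx : (MulAction.stabilizer (Equiv.Perm β) x).index = Nat.card β := by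
    rw [MulAction.index_stabilizer, horb, Set.ncard_univ]
  have hmul := Subgroup.index_mul_card (MulAction.stabilizer (Equiv.Perm β) x)
  rw [hidx] at hmul
  have hperm : Nat.card (Equiv.Perm β) = (Nat.card β).factorial := by
    simp [Nat.card_eq_fintype_card, Fintype.card_perm]
  rw [hperm] at hmul
  have hpos : 0 < Nat.card β := Nat.card_pos
  obtain ⟨m, hm⟩ : ∃ m, Nat.card β = m + 1 := ⟨Nat.card β - 1, (Nat.succ_pred_eq_of_pos hpos).symm⟩
  rw [hm] at hmul ⊢
  simp only [Nat.add_sub_cancel]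
  rw [Nat.factorial_succ] at hmul
  exact Nat.eq_of_mul_eq_mul_left (Nat.succ_pos m) hmul

open CELattice in
/-- Corollary 3 (2.1): if `L` is a finite canonical ℰ-lattice whose lattice of fixed
points is fully (totally) ordered, then `|Aut_ℰ(L)| = ∏_{i=1}^{n} (mᵢ - 1)!`, where
`mᵢ = |[aᵢ]|` and `a₁, …, aₙ` are the fixed points of `ε`. -/
theorem card_eaut_of_finite_chain_fix {L : Type*} [Nonempty L] [Fintype L] [DecidableEq L]
    (E : CELattice L)
    (hchain : ∀ a b : L, E.eps a = a → E.eps b = b → E.meet a b = a ∨ E.meet a b = b) :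
    Nat.card (EAut E) =
      ∏ a : E.FixT, (Nat.card {b : L // E.eps b = E.eps (a : L)} - 1).factorial := by
  classical
  -- Step 1: every automorphism fixes every fixed point (Fix is a finite chain)
  have hfix : ∀ f : Equiv.Perm L, f ∈ E.EAut → ∀ x : L, E.eps x = x → f x = x := by
    intro f hf x hx
    obtain ⟨hf1, hf2, hf3⟩ := hf
    letI : LinearOrder E.FixT :=
      { le := fun a b => E.meet a.1 b.1 = a.1
        le_refl := fun a => by show E.meet a.1 a.1 = a.1; rw [E.meet_self, a.2]
        le_trans := fun a b c hab hbc => by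
          show E.meet a.1 c.1 = a.1
          calc E.meet a.1 c.1 = E.meet (E.meet a.1 b.1) c.1 := by rw [hab]
            _ = E.meet a.1 (E.meet b.1 c.1) := (E.meet_assoc _ _ _).symm
            _ = E.meet a.1 b.1 := by rw [hbc]
            _ = a.1 := hab
        le_antisymm := fun a b hab hba =>
          Subtype.ext (hab.symm.trans ((E.meet_comm a.1 b.1).trans hba))
        le_total := fun a b => by
          rcases hchain a.1 b.1 a.2 b.2 with h | h
          · exact Or.inl h
          · right; show E.meet b.1 a.1 = b.1; rw [E.meet_comm]; exact h
        toDecidableLE := fun a b => inferInstanceAs (Decidable (_ = _)) }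
    have hEquiv : ∀ y : L, E.eps y = y ↔ E.eps (f y) = f y := by
      intro y
      constructor
      · intro hy; rw [← hf1 y, hy]
      · intro hy
        have h := hf1 y
        rw [hy] at h
        exact f.injective h
    let g : E.FixT ≃o E.FixT :=
      { toEquiv := (f : Equiv.Perm L).subtypeEquiv hEquiv
        map_rel_iff' := by
          intro a b
          show E.meet (f a.1) (f b.1) = f a.1 ↔ E.meet a.1 b.1 = a.1
          rw [← hf2]
          exact ⟨fun h => f.injective h, fun h => by rw [h]⟩ }
    have hg : g = OrderIso.refl _ := Subsingleton.elim _ _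
    have hx' := congrArg (fun e : E.FixT ≃o E.FixT => (e ⟨x, hx⟩).1) hg
    simpa [g, Equiv.subtypeEquiv] using hx'
  -- Step 2: automorphisms preserve classes
  have hclass : ∀ f : Equiv.Perm L, f ∈ E.EAut → ∀ b : L, E.eps (f b) = E.eps b := by
    intro f hf b
    rw [← hf.1 b, hfix f hf _ (E.eps_idem b)]
  -- Step 3: the bijection with the product of the class stabilizers
  have e : ↥E.EAut ≃ (∀ a : E.FixT, ↥(E.Sprime a.1)) :=
    { toFun := fun f a =>
        ⟨f.1.subtypePerm (p := fun b : L => E.eps b = E.eps a.1) (fun b =>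
            Iff.intro (fun h => (hclass f.1 f.2 b).symm.trans h)
              (fun h => (hclass f.1 f.2 b).trans h)),
          by
            rw [E.mem_sprime_iff]
            exact Subtype.ext (hfix f.1 f.2 a.1 a.2)⟩
      invFun := fun τ => ⟨E.gPerm τ, E.gPerm_mem τ⟩
      left_inv := fun f => Subtype.ext (Equiv.ext fun x => rfl)
      right_inv := fun τ => funext fun a =>
        Subtype.ext (Equiv.ext fun b => Subtype.ext (E.bigF_eq τ b.1 b.2)) }
  -- Step 4: count
  rw [Nat.card_congr e, Nat.card_pi]
  refine Finset.prod_congr rfl fun a _ => ?_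
  have hs : E.Sprime a.1 =
      MulAction.stabilizer (Equiv.Perm {b : L // E.eps b = E.eps a.1})
        (⟨a.1, rfl⟩ : {b : L // E.eps b = E.eps a.1}) := by
    ext σ
    rw [E.mem_sprime_iff, MulAction.mem_stabilizer_iff]
    rfl
  rw [hs, card_perm_stabilizer]
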